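/- The closure of the truncated moment cone is the dual of the nonnegative polynomial cone: for a finite power set A ⊆ ℕ^n and closed K ⊆ ℝ^n, cl(R_A(K)) = P_A(K)*, i.e., y lies in the closure of the set of A-truncated moment sequences of Borel measures supported in K if and only if ⟨p, y⟩ ≥ 0 for every p ∈ ℝ[x]_A nonnegative on K. -/

import Mathlib

open MeasureTheory Finset

/-- The monomial `x^α` for an exponent vector `α : Fin n → ℕ`. -/
noncomputable def mono {n : ℕ} (α : Fin n → ℕ) (x : Fin n → ℝ) : ℝ := ∏ i, x i ^ α i

/-- The polynomial with coefficient vector `c` supported on the finite power set `A`. -/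
noncomputable def polyA {n : ℕ} (A : Finset (Fin n → ℕ)) (c : A → ℝ) (x : Fin n → ℝ) : ℝ :=
  ∑ α : A, c α * mono (α : Fin n → ℕ) x

/-- The truncated moment cone `R_A(K)`: those `y ∈ ℝ^A` admitting a positive Borel
representing measure supported in `K`. -/
def momCone {n : ℕ} (A : Finset (Fin n → ℕ)) (K : Set (Fin n → ℝ)) : Set (A → ℝ) :=
  {y | ∃ μ : Measure (Fin n → ℝ), μ Kᶜ = 0 ∧
      (∀ α : A, Integrable (mono (α : Fin n → ℕ)) μ) ∧
      (∀ α : A, y α = ∫ x, mono (α : Fin n → ℕ) x ∂μ)}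

lemma mono_continuous {n : ℕ} (α : Fin n → ℕ) : Continuous (mono α) := by
  unfold mono
  exact continuous_finset_prod _ fun i _ => (continuous_apply i).pow _

lemma integrable_dirac'' {n : ℕ} (f : (Fin n → ℝ) → ℝ) (hf : Continuous f)
    (a : Fin n → ℝ) : Integrable f (Measure.dirac a) := by
  refine ⟨hf.aestronglyMeasurable, ?_⟩
  unfold HasFiniteIntegral
  rw [lintegral_dirac' a (hf.measurable.enorm)]
  exact enorm_lt_top

/-- Dirac measures give moment vectors in the cone. -/
lemma dirac_mem_momCone {n : ℕ} (A : Finset (Fin n → ℕ)) (K : Set (Fin n → ℝ))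
    (hK : IsClosed K) {x : Fin n → ℝ} (hx : x ∈ K) :
    (fun α : A => mono (α : Fin n → ℕ) x) ∈ momCone A K := by
  refine ⟨Measure.dirac x, ?_, fun α => integrable_dirac'' _ (mono_continuous _) x,
    fun α => ?_⟩
  · rw [Measure.dirac_apply' _ hK.isOpen_compl.measurableSet]
    simp [Set.indicator, hx]
  · rw [integral_dirac]

/-- The moment cone is convex. -/
lemma momCone_convex {n : ℕ} (A : Finset (Fin n → ℕ)) (K : Set (Fin n → ℝ)) :
    Convex ℝ (momCone A K) := by
  rintro y₁ ⟨μ₁, hμ₁, hi₁, hy₁⟩ y₂ ⟨μ₂, hμ₂, hi₂, hy₂⟩ a b ha hb hab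
  refine ⟨ENNReal.ofReal a • μ₁ + ENNReal.ofReal b • μ₂, ?_, fun α => ?_, fun α => ?_⟩
  · simp [hμ₁, hμ₂]
  · exact ((hi₁ α).smul_measure ENNReal.ofReal_ne_top).add_measure
      ((hi₂ α).smul_measure ENNReal.ofReal_ne_top)
  · rw [integral_add_measure ((hi₁ α).smul_measure ENNReal.ofReal_ne_top)
      ((hi₂ α).smul_measure ENNReal.ofReal_ne_top),
      integral_smul_measure, integral_smul_measure,
      ENNReal.toReal_ofReal ha, ENNReal.toReal_ofReal hb]
    simp only [Pi.add_apply, Pi.smul_apply, smul_eq_mul, hy₁ α, hy₂ α]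

/-- The moment cone is closed under nonnegative scaling. -/
lemma momCone_smul {n : ℕ} (A : Finset (Fin n → ℕ)) (K : Set (Fin n → ℝ))
    {t : ℝ} (ht : 0 ≤ t) {y : A → ℝ} (hy : y ∈ momCone A K) :
    t • y ∈ momCone A K := by
  obtain ⟨μ, hμ, hi, hrep⟩ := hy
  refine ⟨ENNReal.ofReal t • μ, by simp [hμ], fun α =>
    (hi α).smul_measure ENNReal.ofReal_ne_top, fun α => ?_⟩
  rw [integral_smul_measure, ENNReal.toReal_ofReal ht]
  simp [hrep α]

lemma zero_mem_momCone {n : ℕ} (A : Finset (Fin n → ℕ)) (K : Set (Fin n → ℝ)) :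
    (0 : A → ℝ) ∈ momCone A K :=
  ⟨0, rfl, fun _ => integrable_zero_measure, fun _ => by simp⟩

/-- `cl(R_A(K)) = P_A(K)*` — the closure of the truncated moment cone is the
dual cone of the polynomials supported on `A` that are nonnegative on `K`. -/
theorem stmt1 {n : ℕ} (A : Finset (Fin n → ℕ)) (K : Set (Fin n → ℝ)) (hK : IsClosed K) :
    closure (momCone A K) =
      {y : A → ℝ | ∀ c : A → ℝ, (∀ x ∈ K, 0 ≤ polyA A c x) → 0 ≤ ∑ α : A, c α * y α} := by
  classical
  apply Set.Subset.antisymm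
  · -- closure(momCone) ⊆ dual cone
    have hclosed : IsClosed {y : A → ℝ | ∀ c : A → ℝ,
        (∀ x ∈ K, 0 ≤ polyA A c x) → 0 ≤ ∑ α : A, c α * y α} := by
      have : {y : A → ℝ | ∀ c : A → ℝ, (∀ x ∈ K, 0 ≤ polyA A c x) → 0 ≤ ∑ α : A, c α * y α}
          = ⋂ (c : A → ℝ) (_ : ∀ x ∈ K, 0 ≤ polyA A c x), {y | 0 ≤ ∑ α : A, c α * y α} := by
        ext y; simp [Set.mem_iInter]
      rw [this]
      exact isClosed_iInter fun c => isClosed_iInter fun _ =>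
        isClosed_le continuous_const
          (continuous_finset_sum _ fun α _ => (continuous_const.mul (continuous_apply α)))
    refine closure_minimal ?_ hclosed
    rintro y ⟨μ, hμ, hi, hrep⟩ c hc
    have key : ∑ α : A, c α * y α = ∫ x, polyA A c x ∂μ := by
      rw [show (fun x => polyA A c x) = fun x => ∑ α : A, c α * mono (α : Fin n → ℕ) x from rfl,
        integral_finset_sum _ fun α _ => (hi α).const_mul (c α)]
      refine Finset.sum_congr rfl fun α _ => ?_
      rw [hrep α, integral_const_mul]
    rw [key]
    refine integral_nonneg_of_ae ?_
    have hae : ∀ᵐ x ∂μ, x ∈ K := by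
      rw [ae_iff]
      simpa [Set.compl_def] using hμ
    filter_upwards [hae] with x hx using hc x hx
  · -- dual cone ⊆ closure(momCone)
    intro y hy
    by_contra hyc
    obtain ⟨f, u, hfu, huy⟩ := geometric_hahn_banach_closed_point
      ((momCone_convex A K).closure) isClosed_closure hyc
    -- 0 in the closure gives 0 < u
    have h0 : (0 : ℝ) < u := by
      have := hfu 0 (subset_closure (zero_mem_momCone A K))
      simpa using this
    -- f ≤ 0 on momCone
    have hf_nonpos : ∀ z ∈ momCone A K, f z ≤ 0 := by
      intro z hz
      by_contra hpos
      push_neg at hpos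
      have ht : (0:ℝ) ≤ (u + 1) / f z := le_of_lt (div_pos (by linarith) hpos)
      have hmem := momCone_smul A K ht hz
      have := hfu _ (subset_closure hmem)
      rw [f.map_smul, smul_eq_mul, div_mul_cancel₀ _ (ne_of_gt hpos)] at this
      linarith
    -- express f via coefficients
    set c : A → ℝ := fun α => -f (Pi.single α 1) with hc_def
    have hsingle : ∀ α : A, (fun j => if α = j then 1 else 0 : A → ℝ) = Pi.single α 1 := by
      intro α; funext j; simp [Pi.single_apply, eq_comm]
    have hf_repr : ∀ z : A → ℝ, f z = -∑ α : A, c α * z α := by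
      intro z
      have h := LinearMap.pi_apply_eq_sum_univ (f : (A → ℝ) →ₗ[ℝ] ℝ) z
      simp only [ContinuousLinearMap.coe_coe] at h
      rw [h, ← Finset.sum_neg_distrib]
      refine Finset.sum_congr rfl fun α _ => ?_
      rw [hsingle α]
      simp only [hc_def, smul_eq_mul]
      ring
    -- c is nonnegative on K as a polynomial
    have hcK : ∀ x ∈ K, 0 ≤ polyA A c x := by
      intro x hx
      have := hf_nonpos _ (dirac_mem_momCone A K hK hx)
      rw [hf_repr] at this
      have : 0 ≤ ∑ α : A, c α * mono (α : Fin n → ℕ) x := by linarith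
      simpa [polyA] using this
    have := hy c hcK
    have hfy : f y = -∑ α : A, c α * y α := hf_repr y
    linarith
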